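/- For every natural number d, the torus game 𝒯₃(d) is not a Player II win: Player I has a strategy guaranteeing that at no point does his claimed set contain a line unless Player II's claimed set already contained a line earlier. -/

import Mathlib

/-- A strategy: given the history of moves so far (in chronological order),
choose the next point to claim. -/
abbrev Strategy (X : Type*) := List X → X

/-- A strategy is valid if, whenever the history has no repeats and the board is
not yet full, it picks a previously unclaimed point. -/
def ValidStrategy {X : Type*} [Fintype X] (s : Strategy X) : Prop :=
  ∀ h : List X, h.Nodup → h.length < Fintype.card X → s h ∉ h

/-- The play (history of moves) after `k` moves, when Player I uses `sI`
(moving at even times) and Player II uses `sII` (moving at odd times). -/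
def play {X : Type*} (sI sII : Strategy X) : ℕ → List X
  | 0 => []
  | k + 1 =>
      let h := play sI sII k
      h ++ [if k % 2 = 0 then sI h else sII h]

/-- The set of points claimed by Player I in a history: the moves at even positions. -/
def claimedI {X : Type*} (h : List X) : Set X :=
  { x | ∃ i : ℕ, i % 2 = 0 ∧ h[i]? = some x }

/-- The set of points claimed by Player II in a history: the moves at odd positions. -/
def claimedII {X : Type*} (h : List X) : Set X :=
  { x | ∃ i : ℕ, i % 2 = 1 ∧ h[i]? = some x }

/-- A set of points contains a line of `ℒ`. -/
def ContainsLine {X : Type*} (ℒ : Set (Finset X)) (S : Set X) : Prop :=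
  ∃ L ∈ ℒ, ↑L ⊆ S

/-- The avoidance game with lines `ℒ` is a Player I win: Player I has a valid strategy
such that against every valid strategy of Player II there is a moment at which
Player II's claimed set contains a line while Player I's claimed set does not
(by monotonicity of the claimed sets, this says exactly that Player II's set comes
to contain a line strictly before Player I's set does). -/
def PIWin {X : Type*} [Fintype X] (ℒ : Set (Finset X)) : Prop :=
  ∃ sI : Strategy X, ValidStrategy sI ∧
    ∀ sII : Strategy X, ValidStrategy sII →
      ∃ k ≤ Fintype.card X,
        ContainsLine ℒ (claimedII (play sI sII k)) ∧
        ¬ ContainsLine ℒ (claimedI (play sI sII k))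

/-- A permutation of the board is an automorphism of the game if it maps the
family of lines onto itself. -/
def IsGameAuto {X : Type*} [DecidableEq X] (ℒ : Set (Finset X)) (g : Equiv.Perm X) : Prop :=
  ∀ L : Finset X, L ∈ ℒ ↔ L.image g ∈ ℒ

/-- The game is transitive if its automorphism group acts transitively on the board. -/
def TransitiveGame {X : Type*} [DecidableEq X] (ℒ : Set (Finset X)) : Prop :=
  ∀ x y : X, ∃ g : Equiv.Perm X, IsGameAuto ℒ g ∧ g x = y

/-- The avoidance game with lines `ℒ` is a Player II win: Player II has a valid
strategy such that against every valid strategy of Player I there is a moment at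
which Player I's claimed set contains a line while Player II's claimed set does not
(by monotonicity of the claimed sets, this says exactly that Player I's set comes to
contain a line strictly before Player II's set does). -/
def PIIWin {X : Type*} [Fintype X] (ℒ : Set (Finset X)) : Prop :=
  ∃ sII : Strategy X, ValidStrategy sII ∧
    ∀ sI : Strategy X, ValidStrategy sI →
      ∃ k ≤ Fintype.card X,
        ContainsLine ℒ (claimedI (play sI sII k)) ∧
        ¬ ContainsLine ℒ (claimedII (play sI sII k))

/-- The lines of the torus game `𝒯_q(d)`: all sets of the form
`{x, x+y, x+2y, …, x+(q−1)y}` with `x, y ∈ (ℤ/q)^d` and `y ≠ 0`. -/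
def torusLines (q d : ℕ) : Set (Finset (Fin d → ZMod q)) :=
  { L | ∃ x y : Fin d → ZMod q, y ≠ 0 ∧
      L = Finset.image (fun k : Fin q => x + (k : ℕ) • y) Finset.univ }

/-! ### Auxiliary material for statement11 -/

/-- Every element of `(ZMod 3)^d` is 3-torsion. -/
lemma three_tor {d : ℕ} (v : Fin d → ZMod 3) : v + v + v = 0 := by
  funext i
  show v i + v i + v i = 0
  have h3 : (3 : ZMod 3) = 0 := rfl
  calc v i + v i + v i = 3 * v i := by ring
    _ = 0 := by rw [h3, zero_mul]

lemma self_neg_zero {d : ℕ} (v : Fin d → ZMod 3) (h : v = -v) : v = 0 := by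
  have h2 : v + v = 0 := by nth_rewrite 2 [h]; exact add_neg_cancel v
  have h3 := three_tor v
  rw [h2, zero_add] at h3
  exact h3

lemma twoy {d : ℕ} (y : Fin d → ZMod 3) : y + y = -y :=
  eq_neg_of_add_eq_zero_left (three_tor y)

/-- Player I's mirror strategy: play `0` first; afterwards negate Player II's
last move (with an arbitrary fallback, for validity on junk histories). -/
noncomputable def sI3 (d : ℕ) : Strategy (Fin d → ZMod 3) := fun h =>
  if h = ([] : List (Fin d → ZMod 3)) then 0
  else if -(h.getLastD 0) ∈ h then
    (if hc : (h.toFinsetᶜ : Finset (Fin d → ZMod 3)).Nonempty then hc.choose else 0)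
  else -(h.getLastD 0)

lemma sI3_nil (d : ℕ) : sI3 d [] = 0 := by simp [sI3]

lemma sI3_concat {d : ℕ} (h : List (Fin d → ZMod 3)) (w : Fin d → ZMod 3)
    (hw : -w ∉ h ++ [w]) : sI3 d (h ++ [w]) = -w := by
  unfold sI3
  rw [if_neg (by simp), List.getLastD_concat, if_neg hw]

lemma sI3_valid (d : ℕ) : ValidStrategy (sI3 d) := by
  intro h hnd hlen
  unfold sI3
  split_ifs with h1 h2 h3
  · subst h1; simp
  · intro hmem
    have hs := h3.choose_spec
    rw [Finset.mem_compl, List.mem_toFinset] at hs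
    exact hs hmem
  · exfalso
    apply h3
    have hc1 : h.toFinset.card ≤ h.length := List.toFinset_card_le h
    have : 0 < (h.toFinsetᶜ : Finset (Fin d → ZMod 3)).card := by
      rw [Finset.card_compl]; omega
    exact Finset.card_pos.mp this
  · exact h2

section Play

lemma play_succ' {X : Type*} (s1 s2 : Strategy X) (k : ℕ) :
    play s1 s2 (k+1)
      = play s1 s2 k ++ [if k % 2 = 0 then s1 (play s1 s2 k) else s2 (play s1 s2 k)] := rfl

lemma play_length {X : Type*} (s1 s2 : Strategy X) : ∀ k, (play s1 s2 k).length = k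
  | 0 => rfl
  | k+1 => by rw [play_succ']; simp [play_length s1 s2 k]

lemma play_getElem?_stable {X : Type*} (s1 s2 : Strategy X) {i k k' : ℕ} (hkk : k ≤ k')
    (hik : i < k) : (play s1 s2 k')[i]? = (play s1 s2 k)[i]? := by
  induction k' with
  | zero => omega
  | succ n ih =>
    rcases Nat.eq_or_lt_of_le hkk with h | h
    · rw [h]
    · have hk : k ≤ n := by omega
      rw [play_succ', List.getElem?_append_left (by rw [play_length]; omega), ih hk]

end Play

section Main

variable {d : ℕ} (sII : Strategy (Fin d → ZMod 3)) (hsII : ValidStrategy sII)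

lemma play_one : play (sI3 d) sII 1 = [0] := by
  have : play (sI3 d) sII 1 = [] ++ [if 0 % 2 = 0 then sI3 d [] else sII []] := rfl
  rw [this, if_pos rfl, sI3_nil]
  rfl

lemma play_get0 {k : ℕ} (hk1 : 1 ≤ k) :
    (play (sI3 d) sII k)[0]? = some 0 := by
  rw [play_getElem?_stable _ _ hk1 (by omega), play_one]
  rfl

include hsII in
lemma odd_decomp (m : ℕ) (hm : 2*m+3 ≤ Fintype.card (Fin d → ZMod 3))
    (hnd : (play (sI3 d) sII (2*m+1)).Nodup)
    (hsym : ∀ x ∈ play (sI3 d) sII (2*m+1), -x ∈ play (sI3 d) sII (2*m+1))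
    (h0 : (0 : Fin d → ZMod 3) ∈ play (sI3 d) sII (2*m+1)) :
    ∃ xx, play (sI3 d) sII (2*m+3) = play (sI3 d) sII (2*m+1) ++ [xx, -xx]
      ∧ xx ∉ play (sI3 d) sII (2*m+1)
      ∧ -xx ∉ play (sI3 d) sII (2*m+1) ++ [xx] := by
  set E := play (sI3 d) sII (2*m+1) with hE
  set xx := sII E with hxx
  have hxE : xx ∉ E := hsII E hnd (by rw [hE, play_length]; omega)
  have hstep1 : play (sI3 d) sII (2*m+2) = E ++ [xx] := by
    rw [show 2*m+2 = (2*m+1)+1 from rfl, play_succ', if_neg (by omega)]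
  have hnegxx : -xx ∉ E ++ [xx] := by
    intro hmem
    rcases List.mem_append.mp hmem with h | h
    · apply hxE
      have := hsym _ h
      rwa [neg_neg] at this
    · have hx0 : -xx = xx := by simpa using h
      have hz : xx = 0 := self_neg_zero xx hx0.symm
      exact hxE (hz ▸ h0)
  refine ⟨xx, ?_, hxE, hnegxx⟩
  have hstep2 : play (sI3 d) sII (2*m+3) = (E ++ [xx]) ++ [sI3 d (E ++ [xx])] := by
    rw [show 2*m+3 = (2*m+2)+1 from rfl, play_succ', hstep1, if_pos (by omega)]
  rw [hstep2, sI3_concat _ _ hnegxx]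
  simp

include hsII in
lemma block (m : ℕ) (hm : 2*m+1 ≤ Fintype.card (Fin d → ZMod 3)) :
    (play (sI3 d) sII (2*m+1)).Nodup ∧
    (∀ x ∈ play (sI3 d) sII (2*m+1), -x ∈ play (sI3 d) sII (2*m+1)) ∧
    (0 : Fin d → ZMod 3) ∈ play (sI3 d) sII (2*m+1) := by
  induction m with
  | zero =>
    rw [show 2*0+1 = 1 from rfl, play_one]
    refine ⟨by simp, ?_, by simp⟩
    intro x hx
    simp only [List.mem_singleton] at hx
    subst hx
    simp
  | succ m ih =>
    obtain ⟨hnd, hsym, h0⟩ := ih (by omega)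
    obtain ⟨xx, heq, hx1, hx2⟩ := odd_decomp sII hsII m (by omega) hnd hsym h0
    have hidx : 2*(m+1)+1 = 2*m+3 := by ring
    rw [hidx, heq]
    have hne : xx ≠ -xx := by
      intro h
      apply hx2
      rw [← h]
      simp
    refine ⟨?_, ?_, ?_⟩
    · rw [List.nodup_append']
      refine ⟨hnd, by simp [hne], ?_⟩
      intro a haE ha2
      simp only [List.mem_cons, List.mem_singleton, List.not_mem_nil, or_false] at ha2
      rcases ha2 with rfl | rfl
      · exact hx1 haE
      · exact hx2 (List.mem_append_left _ haE)
    · intro a ha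
      rcases List.mem_append.mp ha with h | h
      · exact List.mem_append_left _ (hsym a h)
      · simp only [List.mem_cons, List.mem_singleton, List.not_mem_nil, or_false] at h
        rcases h with rfl | rfl
        · apply List.mem_append_right; simp
        · rw [neg_neg]; apply List.mem_append_right; simp
    · exact List.mem_append_left _ h0

include hsII in
lemma nodup_all (k : ℕ) (hk : k ≤ Fintype.card (Fin d → ZMod 3)) :
    (play (sI3 d) sII k).Nodup := by
  rcases Nat.eq_zero_or_pos k with rfl | hpos
  · simp [play]
  rcases Nat.even_or_odd k with he | ho
  · obtain ⟨m, rfl⟩ : ∃ m, k = 2*m+2 := ⟨k/2 - 1, by obtain ⟨t, ht⟩ := he; omega⟩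
    obtain ⟨hnd, hsym, h0⟩ := block sII hsII m (by omega)
    rw [show 2*m+2 = (2*m+1)+1 from rfl, play_succ', if_neg (by omega)]
    have hxE : sII (play (sI3 d) sII (2*m+1)) ∉ play (sI3 d) sII (2*m+1) :=
      hsII _ hnd (by rw [play_length]; omega)
    rw [List.nodup_append']
    refine ⟨hnd, by simp, ?_⟩
    intro a haE ha2
    simp only [List.mem_singleton] at ha2
    subst ha2
    exact hxE haE
  · obtain ⟨m, rfl⟩ : ∃ m, k = 2*m+1 := ⟨k/2, by obtain ⟨t, ht⟩ := ho; omega⟩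
    exact (block sII hsII m hk).1

include hsII in
lemma mirror (j k : ℕ) (h2 : 2*j+2 < k) (hk : k ≤ Fintype.card (Fin d → ZMod 3)) :
    ∃ x, (play (sI3 d) sII k)[2*j+1]? = some x ∧
      (play (sI3 d) sII k)[2*j+2]? = some (-x) := by
  obtain ⟨hnd, hsym, h0⟩ := block sII hsII j (by omega)
  obtain ⟨xx, heq, _, _⟩ := odd_decomp sII hsII j (by omega) hnd hsym h0
  have hlen : (play (sI3 d) sII (2*j+1)).length = 2*j+1 := play_length _ _ _
  refine ⟨xx, ?_, ?_⟩
  · rw [play_getElem?_stable _ _ (show 2*j+3 ≤ k by omega) (by omega), heq,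
      List.getElem?_append_right (by omega), hlen]
    simp
  · rw [play_getElem?_stable _ _ (show 2*j+3 ≤ k by omega) (by omega), heq,
      List.getElem?_append_right (by omega), hlen]
    have : 2*j+2 - (2*j+1) = 1 := by omega
    rw [this]
    rfl

include hsII in
lemma claimedI_mirror (k : ℕ) (hk : k ≤ Fintype.card (Fin d → ZMod 3))
    (a : Fin d → ZMod 3) (ha : a ∈ claimedI (play (sI3 d) sII k)) :
    a = 0 ∨ -a ∈ claimedII (play (sI3 d) sII k) := by
  obtain ⟨i, hi2, hig⟩ := ha
  have hil : i < k := by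
    have := (List.getElem?_eq_some_iff.mp hig).fst
    rwa [play_length] at this
  rcases Nat.eq_zero_or_pos i with rfl | hipos
  · left
    rw [play_get0 sII (by omega)] at hig
    exact (Option.some_injective _ hig).symm
  · right
    obtain ⟨j, rfl⟩ : ∃ j, i = 2*j+2 := ⟨i/2 - 1, by omega⟩
    obtain ⟨x, hx1, hx2⟩ := mirror sII hsII j k (by omega) hk
    rw [hx2] at hig
    have hax : a = -x := (Option.some_injective _ hig).symm
    refine ⟨2*j+1, by omega, ?_⟩
    rw [hax, neg_neg]
    exact hx1

include hsII in
lemma claimedII_pairs (k : ℕ) (hk : k ≤ Fintype.card (Fin d → ZMod 3)) :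
    ∀ i i' (u : Fin d → ZMod 3), i < i' → i % 2 = 1 → i' % 2 = 1 →
      (play (sI3 d) sII k)[i]? = some u →
      (play (sI3 d) sII k)[i']? = some (-u) → False := by
  intro i i' u hii hi hi' hgi hgi'
  have hnd := nodup_all sII hsII k hk
  have hil : i' < k := by
    have := (List.getElem?_eq_some_iff.mp hgi').fst
    rwa [play_length] at this
  obtain ⟨j, rfl⟩ : ∃ j, i = 2*j+1 := ⟨i/2, by omega⟩
  obtain ⟨x, hx1, hx2⟩ := mirror sII hsII j k (by omega) hk
  rw [hgi] at hx1
  have hxu : x = u := Option.some_injective _ hx1.symm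
  subst hxu
  have heq : (play (sI3 d) sII k)[2*j+2]? = (play (sI3 d) sII k)[i']? := by
    rw [hx2, hgi']
  have := (List.getElem?_inj (by rw [play_length]; omega) hnd).mp heq
  omega

include hsII in
lemma claimedII_pairfree (k : ℕ) (hk : k ≤ Fintype.card (Fin d → ZMod 3))
    (u : Fin d → ZMod 3) (hu : u ∈ claimedII (play (sI3 d) sII k)) :
    -u ∉ claimedII (play (sI3 d) sII k) := by
  intro hnu
  obtain ⟨i, hi1, hig⟩ := hu
  obtain ⟨i', hi'1, hig'⟩ := hnu
  have hnd := nodup_all sII hsII k hk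
  rcases lt_trichotomy i i' with h | h | h
  · exact claimedII_pairs sII hsII k hk i i' u h hi1 hi'1 hig hig'
  · subst h
    rw [hig] at hig'
    have huu : u = -u := Option.some_injective _ hig'
    have hz : u = 0 := self_neg_zero u huu
    subst hz
    have hil : i < k := by
      have := (List.getElem?_eq_some_iff.mp hig).fst
      rwa [play_length] at this
    have h0 := play_get0 sII (d := d) (k := k) (by omega)
    have heq : (play (sI3 d) sII k)[i]? = (play (sI3 d) sII k)[0]? := by
      rw [hig, h0]
    have := (List.getElem?_inj (by rw [play_length]; omega) hnd).mp heq
    omega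
  · apply claimedII_pairs sII hsII k hk i' i (-u) h hi'1 hi1 hig'
    rw [neg_neg]
    exact hig

include hsII in
lemma key (k : ℕ) (hk : k ≤ Fintype.card (Fin d → ZMod 3)) :
    ContainsLine (torusLines 3 d) (claimedI (play (sI3 d) sII k)) →
    ContainsLine (torusLines 3 d) (claimedII (play (sI3 d) sII k)) := by
  rintro ⟨L, hL, hsub⟩
  obtain ⟨x, y, hy, rfl⟩ := hL
  have hmem : ∀ kk : Fin 3, x + (kk : ℕ) • y ∈ claimedI (play (sI3 d) sII k) := by
    intro kk
    apply hsub
    exact Finset.mem_coe.mpr (Finset.mem_image_of_mem _ (Finset.mem_univ kk))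
  by_cases h0 : ∃ kk : Fin 3, x + (kk : ℕ) • y = 0
  · -- line through 0: contradiction
    exfalso
    have ha := hmem 0
    have hb := hmem 1
    have hc := hmem 2
    have hv0 : ((0 : Fin 3) : ℕ) = 0 := rfl
    have hv1 : ((1 : Fin 3) : ℕ) = 1 := rfl
    have hv2 : ((2 : Fin 3) : ℕ) = 2 := rfl
    rw [hv0, zero_smul, add_zero] at ha
    rw [hv1, one_smul] at hb
    rw [hv2, two_smul] at hc
    obtain ⟨n, hn⟩ := h0
    have hyy := twoy y
    -- produce u = y and -y both in claimedI
    have hkey : y ∈ claimedI (play (sI3 d) sII k) ∧ -y ∈ claimedI (play (sI3 d) sII k) := by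
      have hn3 : (n : ℕ) = 0 ∨ (n : ℕ) = 1 ∨ (n : ℕ) = 2 := by omega
      rcases hn3 with h | h | h
      · rw [h, zero_smul, add_zero] at hn
        subst hn
        rw [zero_add] at hb
        rw [zero_add, hyy] at hc
        exact ⟨hb, hc⟩
      · rw [h, one_smul] at hn
        have hx : x = -y := eq_neg_of_add_eq_zero_left hn
        subst hx
        have hc' : -y + (y + y) = y := by abel
        rw [hc'] at hc
        exact ⟨hc, ha⟩
      · rw [h, two_smul] at hn
        have hx : x = -(y + y) := eq_neg_of_add_eq_zero_left hn
        rw [hyy, neg_neg] at hx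
        subst hx
        rw [hyy] at hb
        exact ⟨ha, hb⟩
    obtain ⟨hyI, hnyI⟩ := hkey
    have h1 := claimedI_mirror sII hsII k hk y hyI
    have h2 := claimedI_mirror sII hsII k hk (-y) hnyI
    rcases h1 with h1 | h1
    · exact hy h1
    rcases h2 with h2 | h2
    · exact hy (neg_eq_zero.mp h2)
    rw [neg_neg] at h2
    exact claimedII_pairfree sII hsII k hk (-y) h1 (by rwa [neg_neg]) 
  · push_neg at h0
    refine ⟨Finset.image (fun kk : Fin 3 => -x + (kk : ℕ) • (-y)) Finset.univ,
      ⟨-x, -y, neg_ne_zero.mpr hy, rfl⟩, ?_⟩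
    intro a ha
    simp only [Finset.coe_image, Finset.coe_univ, Set.image_univ, Set.mem_range] at ha
    obtain ⟨kk, rfl⟩ := ha
    have heq : -x + (kk : ℕ) • (-y) = -(x + (kk : ℕ) • y) := by
      rw [smul_neg]; abel
    rw [heq]
    rcases claimedI_mirror sII hsII k hk _ (hmem kk) with h | h
    · exact absurd h (h0 kk)
    · exact h

end Main

/-- For every natural number `d`, the torus game `𝒯₃(d)` is not a Player II win. -/
theorem statement11 (d : ℕ) : ¬ PIIWin (torusLines 3 d) := by
  rintro ⟨sII, hsII, hwin⟩
  obtain ⟨k, hk, hI, hII⟩ := hwin (sI3 d) (sI3_valid d)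
  exact hII (key sII hsII k hk hI)
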